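/- Let X ~ N(a, b) with b > 0. Then for any θ ∈ [0,1], P(|X| ≥ √(θ(a² + b))) ≥ (1-θ)²/9. -/

import Mathlib

open MeasureTheory Real Set
open scoped NNReal ENNReal

lemma monoInt {c : ℝ} (hc : 0 < c) (n : ℕ) :
    Integrable (fun x : ℝ => x ^ n * rexp (-c * x^2)) := by
  have h := integrable_rpow_mul_exp_neg_mul_sq hc (s := (n:ℝ))
    (by exact_mod_cast neg_one_lt_zero.trans_le (Nat.cast_nonneg n))
  simpa [Real.rpow_natCast] using h

lemma oddMoment {c : ℝ} {n : ℕ} (hn : Odd n) :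
    ∫ x : ℝ, x ^ n * rexp (-c * x^2) = 0 := by
  have h := MeasureTheory.integral_neg_eq_self (fun x : ℝ => x ^ n * rexp (-c * x^2)) volume
  simp only [hn.neg_pow, neg_sq, neg_mul] at h
  rw [integral_neg] at h
  simp only [neg_mul]
  linarith

lemma evenMoment {c : ℝ} (hc : 0 < c) (n : ℕ) :
    ∫ x : ℝ, x ^ (2*n) * rexp (-c * x^2)
      = c ^ (-(2*(n:ℝ)+1)/2) * Real.Gamma ((2*(n:ℝ)+1)/2) := by
  have habs : ∫ x : ℝ, x ^ (2*n) * rexp (-c * x^2)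
      = ∫ x : ℝ, |x| ^ (2*n) * rexp (-c * |x|^2) := by
    congr 1; funext x; simp [pow_mul, sq_abs]
  rw [habs, integral_comp_abs (f := fun t : ℝ => t ^ (2*n) * rexp (-c * t^2))]
  have h := integral_rpow_mul_exp_neg_mul_rpow (p := 2) (q := (2*(n:ℝ))) (b := c)
    (by norm_num) (lt_of_lt_of_le neg_one_lt_zero (by positivity)) hc
  have he : ∀ x ∈ Ioi (0:ℝ), x ^ ((2*n : ℕ)) * rexp (-c * x^2)
      = x ^ (2*(n:ℝ)) * rexp (-c * x ^ (2:ℝ)) := by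
    intro x hx
    rw [show (2*(n:ℝ)) = ((2*n : ℕ) : ℝ) by push_cast; ring, Real.rpow_natCast,
      Real.rpow_two]
  rw [setIntegral_congr_fun measurableSet_Ioi he, h]
  ring

lemma crpow {s : ℝ} (hs : 0 < s) (r : ℝ) : ((s^2)⁻¹ : ℝ) ^ (-r/2) = s ^ r := by
  have h2 : ((s^2)⁻¹ : ℝ) = s ^ (-2:ℝ) := by
    rw [Real.rpow_neg hs.le, Real.rpow_two]
  rw [h2, ← Real.rpow_mul hs.le]
  congr 1; ring

lemma Gamma32 : Real.Gamma ((3:ℝ)/2) = Real.sqrt π / 2 := by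
  rw [show (3:ℝ)/2 = 1/2 + 1 by norm_num, Real.Gamma_add_one (by norm_num),
    Real.Gamma_one_half_eq]
  ring

lemma Gamma52 : Real.Gamma ((5:ℝ)/2) = 3 * Real.sqrt π / 4 := by
  rw [show (5:ℝ)/2 = 3/2 + 1 by norm_num, Real.Gamma_add_one (by norm_num), Gamma32]
  ring

lemma J0' {s : ℝ} (hs : 0 < s) : ∫ x : ℝ, rexp (-(s^2)⁻¹ * x^2) = s * Real.sqrt π := by
  have h := evenMoment (c := (s^2)⁻¹) (by positivity) 0
  simp only [Nat.cast_zero, mul_zero, pow_zero, one_mul, zero_add] at h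
  rw [h, show (-(1:ℝ)/2) = -(1:ℝ)/2 from rfl, crpow hs, Real.rpow_one,
    show ((1:ℝ)/2) = 1/2 from rfl, Real.Gamma_one_half_eq]

lemma J2' {s : ℝ} (hs : 0 < s) :
    ∫ x : ℝ, x^2 * rexp (-(s^2)⁻¹ * x^2) = s^3 * (Real.sqrt π / 2) := by
  have h := evenMoment (c := (s^2)⁻¹) (by positivity) 1
  norm_num at h
  rw [show (-(3/2):ℝ) = -(3:ℝ)/2 by norm_num] at h
  simp only [neg_mul]
  rw [h, crpow hs, Gamma32, show (3:ℝ) = ((3:ℕ):ℝ) by norm_num, Real.rpow_natCast]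

lemma J4' {s : ℝ} (hs : 0 < s) :
    ∫ x : ℝ, x^4 * rexp (-(s^2)⁻¹ * x^2) = s^5 * (3 * Real.sqrt π / 4) := by
  have h := evenMoment (c := (s^2)⁻¹) (by positivity) 2
  norm_num at h
  rw [show (-(5/2):ℝ) = -(5:ℝ)/2 by norm_num] at h
  simp only [neg_mul]
  rw [h, crpow hs, Gamma52, show (5:ℝ) = ((5:ℕ):ℝ) by norm_num, Real.rpow_natCast]

namespace ProbabilityTheory

lemma integral_gaussianReal_eq (a : ℝ) (b : ℝ≥0) (hb : 0 < b) (f : ℝ → ℝ) :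
    ∫ x, f x ∂(gaussianReal a b) = ∫ x, gaussianPDFReal a b x * f x := by
  rw [gaussianReal_of_var_ne_zero a hb.ne']
  rw [show gaussianPDF a b = fun x => ((gaussianPDFReal a b x).toNNReal : ENNReal) from rfl]
  rw [integral_withDensity_eq_integral_smul (measurable_gaussianPDFReal a b).real_toNNReal f]
  congr 1; funext x
  simp only [NNReal.smul_def, smul_eq_mul, Real.coe_toNNReal _ (gaussianPDFReal_nonneg a b x)]

lemma integrable_gaussianReal_iff (a : ℝ) (b : ℝ≥0) (hb : 0 < b) (f : ℝ → ℝ) :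
    Integrable f (gaussianReal a b) ↔ Integrable (fun x => gaussianPDFReal a b x * f x) := by
  rw [gaussianReal_of_var_ne_zero a hb.ne']
  rw [show gaussianPDF a b = fun x => ((gaussianPDFReal a b x).toNNReal : ENNReal) from rfl]
  rw [integrable_withDensity_iff_integrable_smul (measurable_gaussianPDFReal a b).real_toNNReal]
  constructor <;> intro h <;> refine h.congr (Filter.Eventually.of_forall fun x => ?_) <;>
    simp only [NNReal.smul_def, smul_eq_mul, Real.coe_toNNReal _ (gaussianPDFReal_nonneg a b x)]

lemma hs_pos (b : ℝ≥0) (hb : 0 < b) : 0 < Real.sqrt (2*(b:ℝ)) := by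
  have : (0:ℝ) < b := hb
  positivity

lemma hs_sq (b : ℝ≥0) (hb : 0 < b) : (Real.sqrt (2*(b:ℝ)))^2 = 2*(b:ℝ) := by
  have : (0:ℝ) < b := hb
  rw [sq_sqrt]; positivity

lemma pdf0_eq (b : ℝ≥0) (hb : 0 < b) (x : ℝ) :
    gaussianPDFReal 0 b x = (Real.sqrt π * Real.sqrt (2*(b:ℝ)))⁻¹ *
      rexp (-((2*(b:ℝ))⁻¹) * x^2) := by
  have hbpos : (0:ℝ) < b := hb
  rw [gaussianPDFReal]
  rw [show 2 * π * (b:ℝ) = π * (2*(b:ℝ)) by ring, Real.sqrt_mul pi_pos.le]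
  congr 1
  rw [sub_zero]
  congr 1
  field_simp

lemma pdf0_eq' (b : ℝ≥0) (hb : 0 < b) (x : ℝ) :
    gaussianPDFReal 0 b x = (Real.sqrt π * Real.sqrt (2*(b:ℝ)))⁻¹ *
      rexp (-((Real.sqrt (2*(b:ℝ)))^2)⁻¹ * x^2) := by
  rw [pdf0_eq b hb x, hs_sq b hb]

lemma centered_integrable (a : ℝ) (b : ℝ≥0) (hb : 0 < b) (n : ℕ) :
    Integrable (fun y : ℝ => gaussianPDFReal 0 b y * (y+a)^n) := by
  set s := Real.sqrt (2*(b:ℝ)) with hs_def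
  have hs : 0 < s := hs_pos b hb
  have hc : (0:ℝ) < (s^2)⁻¹ := by positivity
  have key : (fun y : ℝ => gaussianPDFReal 0 b y * (y+a)^n)
      = fun y : ℝ => ∑ k ∈ Finset.range (n+1),
          ((Real.sqrt π * s)⁻¹ * (a^(n-k) * (n.choose k : ℝ))) *
            (y^k * rexp (-(s^2)⁻¹ * y^2)) := by
    funext y
    rw [pdf0_eq' b hb y, add_pow, Finset.mul_sum]
    refine Finset.sum_congr rfl fun k _ => ?_
    ring
  rw [key]
  exact integrable_finset_sum _ fun k _ => (monoInt hc k).const_mul _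

lemma gauss_integrable_pow (a : ℝ) (b : ℝ≥0) (hb : 0 < b) (n : ℕ) :
    Integrable (fun x : ℝ => x^n) (gaussianReal a b) := by
  rw [integrable_gaussianReal_iff a b hb]
  have h := (centered_integrable a b hb n).comp_sub_right a
  refine h.congr (Filter.Eventually.of_forall fun x => ?_)
  simp only [gaussianPDFReal_sub, zero_add, sub_add_cancel]

lemma gauss_moment_two (a : ℝ) (b : ℝ≥0) (hb : 0 < b) :
    ∫ x, x^2 ∂(gaussianReal a b) = a^2 + b := by
  set s := Real.sqrt (2*(b:ℝ)) with hs_def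
  set p := Real.sqrt π with hp_def
  have hs : 0 < s := hs_pos b hb
  have hp : 0 < p := Real.sqrt_pos.2 pi_pos
  have hc : (0:ℝ) < (s^2)⁻¹ := by positivity
  rw [integral_gaussianReal_eq a b hb]
  rw [← integral_add_right_eq_self (fun x => gaussianPDFReal a b x * x^2) a]
  have hsh : (fun x : ℝ => gaussianPDFReal a b (x + a) * (x+a)^2)
      = fun x : ℝ => (p*s)⁻¹ * (x^2 * rexp (-(s^2)⁻¹*x^2))
          + ((p*s)⁻¹ * (2*a) * (x^1 * rexp (-(s^2)⁻¹*x^2))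
          + (p*s)⁻¹ * (a^2) * (rexp (-(s^2)⁻¹*x^2))) := by
    funext x
    rw [gaussianPDFReal_add, sub_self, pdf0_eq' b hb x]
    ring
  have i2 : Integrable (fun x : ℝ => (p*s)⁻¹ * (x^2 * rexp (-(s^2)⁻¹*x^2))) :=
    (monoInt hc 2).const_mul _
  have i1 : Integrable (fun x : ℝ => (p*s)⁻¹ * (2*a) * (x^1 * rexp (-(s^2)⁻¹*x^2))) :=
    (monoInt hc 1).const_mul _
  have i0 : Integrable (fun x : ℝ => (p*s)⁻¹ * (a^2) * (rexp (-(s^2)⁻¹*x^2))) := by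
    have h := monoInt hc 0
    simp only [pow_zero, one_mul] at h
    exact h.const_mul _
  have i10 : Integrable (fun x : ℝ => (p*s)⁻¹ * (2*a) * (x^1 * rexp (-(s^2)⁻¹*x^2))
      + (p*s)⁻¹ * (a^2) * (rexp (-(s^2)⁻¹*x^2))) := i1.add i0
  rw [hsh, integral_add i2 i10, integral_add i1 i0,
    integral_const_mul, integral_const_mul, integral_const_mul,
    J2' hs, J0' hs]
  rw [show ∫ x : ℝ, x^1 * rexp (-(s^2)⁻¹*x^2) = 0 from oddMoment odd_one]
  have h2 : s^2 = 2*(b:ℝ) := hs_sq b hb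
  rw [← hp_def]
  field_simp
  nlinarith [h2, hp.le, hs.le, sq_nonneg (p*s), show p*s^3 = p*s*(2*(b:ℝ)) by rw [← h2]; ring]

lemma gauss_moment_four (a : ℝ) (b : ℝ≥0) (hb : 0 < b) :
    ∫ x, x^4 ∂(gaussianReal a b) = a^4 + 6*a^2*(b:ℝ) + 3*(b:ℝ)^2 := by
  set s := Real.sqrt (2*(b:ℝ)) with hs_def
  set p := Real.sqrt π with hp_def
  have hs : 0 < s := hs_pos b hb
  have hp : 0 < p := Real.sqrt_pos.2 pi_pos
  have hc : (0:ℝ) < (s^2)⁻¹ := by positivity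
  rw [integral_gaussianReal_eq a b hb]
  rw [← integral_add_right_eq_self (fun x => gaussianPDFReal a b x * x^4) a]
  have hsh : (fun x : ℝ => gaussianPDFReal a b (x + a) * (x+a)^4)
      = fun x : ℝ => (p*s)⁻¹ * (x^4 * rexp (-(s^2)⁻¹*x^2))
          + ((p*s)⁻¹ * (4*a) * (x^3 * rexp (-(s^2)⁻¹*x^2))
          + ((p*s)⁻¹ * (6*a^2) * (x^2 * rexp (-(s^2)⁻¹*x^2))
          + ((p*s)⁻¹ * (4*a^3) * (x^1 * rexp (-(s^2)⁻¹*x^2))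
          + (p*s)⁻¹ * (a^4) * (rexp (-(s^2)⁻¹*x^2))))) := by
    funext x
    rw [gaussianPDFReal_add, sub_self, pdf0_eq' b hb x]
    ring
  have i4 : Integrable (fun x : ℝ => (p*s)⁻¹ * (x^4 * rexp (-(s^2)⁻¹*x^2))) :=
    (monoInt hc 4).const_mul _
  have i3 : Integrable (fun x : ℝ => (p*s)⁻¹ * (4*a) * (x^3 * rexp (-(s^2)⁻¹*x^2))) :=
    (monoInt hc 3).const_mul _
  have i2 : Integrable (fun x : ℝ => (p*s)⁻¹ * (6*a^2) * (x^2 * rexp (-(s^2)⁻¹*x^2))) :=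
    (monoInt hc 2).const_mul _
  have i1 : Integrable (fun x : ℝ => (p*s)⁻¹ * (4*a^3) * (x^1 * rexp (-(s^2)⁻¹*x^2))) :=
    (monoInt hc 1).const_mul _
  have i0 : Integrable (fun x : ℝ => (p*s)⁻¹ * (a^4) * (rexp (-(s^2)⁻¹*x^2))) := by
    have h := monoInt hc 0
    simp only [pow_zero, one_mul] at h
    exact h.const_mul _
  have i10 : Integrable (fun x : ℝ => (p*s)⁻¹ * (4*a^3) * (x^1 * rexp (-(s^2)⁻¹*x^2))
      + (p*s)⁻¹ * (a^4) * (rexp (-(s^2)⁻¹*x^2))) := i1.add i0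
  have i210 : Integrable (fun x : ℝ => (p*s)⁻¹ * (6*a^2) * (x^2 * rexp (-(s^2)⁻¹*x^2))
      + ((p*s)⁻¹ * (4*a^3) * (x^1 * rexp (-(s^2)⁻¹*x^2))
      + (p*s)⁻¹ * (a^4) * (rexp (-(s^2)⁻¹*x^2)))) := i2.add i10
  have i3210 : Integrable (fun x : ℝ => (p*s)⁻¹ * (4*a) * (x^3 * rexp (-(s^2)⁻¹*x^2))
      + ((p*s)⁻¹ * (6*a^2) * (x^2 * rexp (-(s^2)⁻¹*x^2))
      + ((p*s)⁻¹ * (4*a^3) * (x^1 * rexp (-(s^2)⁻¹*x^2))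
      + (p*s)⁻¹ * (a^4) * (rexp (-(s^2)⁻¹*x^2))))) := i3.add i210
  rw [hsh, integral_add i4 i3210, integral_add i3 i210, integral_add i2 i10,
    integral_add i1 i0, integral_const_mul, integral_const_mul, integral_const_mul,
    integral_const_mul, integral_const_mul, J4' hs, J2' hs, J0' hs]
  rw [show ∫ x : ℝ, x^1 * rexp (-(s^2)⁻¹*x^2) = 0 from oddMoment odd_one,
    show ∫ x : ℝ, x^3 * rexp (-(s^2)⁻¹*x^2) = 0 from oddMoment (by decide)]
  have h2 : s^2 = 2*(b:ℝ) := hs_sq b hb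
  rw [← hp_def]
  rw [show (s:ℝ)^5 = s*(s^2)^2 from by ring, show (s:ℝ)^3 = s*s^2 from by ring, h2]
  field_simp
  ring

end ProbabilityTheory

open ProbabilityTheory

/-- Gaussian small-ball bound (Paley–Zygmund for Gaussians):
if `X ~ N(a, b)` with `b > 0`, then for `θ ∈ [0,1]`,
`P(|X| ≥ √(θ(a² + b))) ≥ (1-θ)²/9`. -/
theorem stmt11 (a : ℝ) (b : NNReal) (hb : 0 < b) (θ : ℝ) (hθ : θ ∈ Set.Icc (0:ℝ) 1) :
    ENNReal.ofReal ((1 - θ)^2 / 9) ≤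
      gaussianReal a b {x : ℝ | Real.sqrt (θ * (a^2 + b)) ≤ |x|} := by
  obtain ⟨hθ0, hθ1⟩ := hθ
  have hbR : (0:ℝ) < b := hb
  set μ := gaussianReal a b with hμ_def
  haveI : IsProbabilityMeasure μ := by rw [hμ_def]; infer_instance
  set m2 : ℝ := a^2 + (b:ℝ) with hm2_def
  set m4 : ℝ := a^4 + 6*a^2*(b:ℝ) + 3*(b:ℝ)^2 with hm4_def
  have hm2 : 0 < m2 := by positivity
  have hm4 : 0 < m4 := by positivity
  set S : Set ℝ := {x : ℝ | Real.sqrt (θ * m2) ≤ |x|} with hS_def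
  have hS : MeasurableSet S := measurableSet_le measurable_const measurable_id.abs
  set f : ℝ → ℝ≥0∞ := fun x => ENNReal.ofReal (x^2) with hf_def
  have hmf : Measurable f := (measurable_id.pow_const 2).ennreal_ofReal
  have L2 : ∫⁻ x, f x ∂μ = ENNReal.ofReal m2 := by
    rw [← ofReal_integral_eq_lintegral_ofReal (gauss_integrable_pow a b hb 2)
      (ae_of_all _ fun x => sq_nonneg x), gauss_moment_two a b hb]
  have L4 : ∫⁻ x, ENNReal.ofReal (x^4) ∂μ = ENNReal.ofReal m4 := by
    rw [← ofReal_integral_eq_lintegral_ofReal (gauss_integrable_pow a b hb 4)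
      (ae_of_all _ fun x => by positivity), gauss_moment_four a b hb]
  -- lower bound on the set lintegral
  have hcompl : ∫⁻ x in Sᶜ, f x ∂μ ≤ ENNReal.ofReal (θ * m2) := by
    have hb1 : ∫⁻ x in Sᶜ, f x ∂μ ≤ ∫⁻ _ in Sᶜ, ENNReal.ofReal (θ * m2) ∂μ := by
      refine setLIntegral_mono measurable_const fun x hx => ?_
      have hx' : |x| < Real.sqrt (θ * m2) := not_le.1 hx
      refine ENNReal.ofReal_le_ofReal ?_
      have habs : x^2 = |x|^2 := (sq_abs x).symm
      have := Real.sq_sqrt (by positivity : (0:ℝ) ≤ θ * m2)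
      nlinarith [abs_nonneg x, Real.sqrt_nonneg (θ * m2)]
    refine hb1.trans ?_
    rw [setLIntegral_const]
    calc ENNReal.ofReal (θ * m2) * μ Sᶜ ≤ ENNReal.ofReal (θ * m2) * 1 :=
          mul_le_mul_right prob_le_one _
      _ = ENNReal.ofReal (θ * m2) := mul_one _
  have hlow : ENNReal.ofReal ((1-θ) * m2) ≤ ∫⁻ x in S, f x ∂μ := by
    have hsplit : ∫⁻ x in S, f x ∂μ + ∫⁻ x in Sᶜ, f x ∂μ = ENNReal.ofReal m2 := by
      rw [lintegral_add_compl f hS, L2]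
    have hsum : ENNReal.ofReal ((1-θ) * m2) + ENNReal.ofReal (θ * m2)
        ≤ ∫⁻ x in S, f x ∂μ + ENNReal.ofReal (θ * m2) := by
      rw [← ENNReal.ofReal_add (by nlinarith) (by positivity),
        show (1-θ)*m2 + θ*m2 = m2 by ring, ← hsplit]
      exact add_le_add_right hcompl _
    exact (ENNReal.add_le_add_iff_right ENNReal.ofReal_ne_top).1 hsum
  -- Cauchy-Schwarz
  set g : ℝ → ℝ≥0∞ := S.indicator (fun _ => 1) with hg_def
  have hmg : Measurable g := measurable_one.indicator hS
  have hCS := ENNReal.lintegral_mul_le_Lp_mul_Lq μ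
    (⟨by norm_num, by norm_num, by norm_num⟩ : Real.HolderConjugate 2 2)
    hmf.aemeasurable hmg.aemeasurable
  have e1 : ∫⁻ x, (f * g) x ∂μ = ∫⁻ x in S, f x ∂μ := by
    rw [← lintegral_indicator hS]
    congr 1; funext x
    by_cases hx : x ∈ S <;> simp [hg_def, hx, Set.indicator_of_mem, Set.indicator_of_notMem]
  have e2 : ∫⁻ x, f x ^ (2:ℝ) ∂μ = ENNReal.ofReal m4 := by
    rw [← L4]; congr 1; funext x
    rw [hf_def, ENNReal.ofReal_rpow_of_nonneg (sq_nonneg x) (by norm_num)]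
    congr 1
    rw [show (2:ℝ) = ((2:ℕ):ℝ) by norm_num, Real.rpow_natCast]
    ring
  have e3 : ∫⁻ x, g x ^ (2:ℝ) ∂μ = μ S := by
    rw [← lintegral_indicator_one hS]
    congr 1; funext x
    by_cases hx : x ∈ S <;>
      simp [hg_def, hx, Set.indicator_of_mem, Set.indicator_of_notMem,
        ENNReal.zero_rpow_of_pos (by norm_num : (0:ℝ) < 2)]
  rw [e1, e2, e3] at hCS
  have hchain : ENNReal.ofReal ((1-θ) * m2)
      ≤ ENNReal.ofReal m4 ^ ((1:ℝ)/2) * μ S ^ ((1:ℝ)/2) := hlow.trans hCS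
  -- square both sides
  have hsq : ENNReal.ofReal ((1-θ) * m2) ^ (2:ℝ) ≤ ENNReal.ofReal m4 * μ S := by
    have h := ENNReal.rpow_le_rpow hchain (by norm_num : (0:ℝ) ≤ 2)
    calc ENNReal.ofReal ((1-θ) * m2) ^ (2:ℝ)
        ≤ (ENNReal.ofReal m4 ^ ((1:ℝ)/2) * μ S ^ ((1:ℝ)/2)) ^ (2:ℝ) := h
      _ = ENNReal.ofReal m4 * μ S := by
          rw [ENNReal.mul_rpow_of_nonneg _ _ (by norm_num : (0:ℝ) ≤ 2),
            ← ENNReal.rpow_mul, ← ENNReal.rpow_mul]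
          norm_num
  -- conclude
  have hkey : ENNReal.ofReal m4 * ENNReal.ofReal ((1 - θ)^2 / 9)
      ≤ ENNReal.ofReal m4 * μ S := by
    calc ENNReal.ofReal m4 * ENNReal.ofReal ((1 - θ)^2 / 9)
        = ENNReal.ofReal (m4 * ((1 - θ)^2 / 9)) := by
          rw [← ENNReal.ofReal_mul hm4.le]
      _ ≤ ENNReal.ofReal (((1-θ) * m2)^2) := by
          refine ENNReal.ofReal_le_ofReal ?_
          have hm4le : m4 ≤ 9 * m2^2 := by nlinarith [sq_nonneg a, hbR.le, sq_nonneg (a^2 - (b:ℝ))]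
          calc m4 * ((1 - θ)^2 / 9) ≤ (9 * m2^2) * ((1 - θ)^2 / 9) :=
                mul_le_mul_of_nonneg_right hm4le (by positivity)
            _ = ((1-θ) * m2)^2 := by ring
      _ = ENNReal.ofReal ((1-θ) * m2) ^ (2:ℝ) := by
          rw [ENNReal.ofReal_rpow_of_nonneg (by nlinarith) (by norm_num : (0:ℝ) ≤ 2)]
          congr 1
          rw [show (2:ℝ) = ((2:ℕ):ℝ) by norm_num, Real.rpow_natCast]
      _ ≤ ENNReal.ofReal m4 * μ S := hsq
  have := (ENNReal.mul_le_mul_iff_right (by simp [ENNReal.ofReal_eq_zero]; linarith : ENNReal.ofReal m4 ≠ 0)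
    ENNReal.ofReal_ne_top).1 hkey
  exact this
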